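/- For every k_0 large enough (depending on the coefficients), if integers a_1,...,a_q, b_1,...,b_q, c satisfy \sum_{i=1}^q (a_i z_i + b_i z_{i+q}) = c, then for all k \geq k_0 one has \sum_{i=1}^q (a_i p_i^{-N^{2k}} + b_i p_i^{-N^{2k+1}}) = 0. -/

import Mathlib

private lemma aux_summable (x : ℕ) (hx : 2 ≤ x) (e : ℕ → ℕ) (he : ∀ j, j ≤ e j) :
    Summable (fun j : ℕ => ((x : ℝ) ^ (e j))⁻¹) := by
  apply Summable.of_nonneg_of_le (fun j => by positivity) (fun j => ?_)
    summable_geometric_two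
  rw [one_div, inv_pow]
  apply inv_anti₀ (by positivity)
  calc ((2:ℝ)) ^ j ≤ (2:ℝ) ^ (e j) := by
        exact pow_le_pow_right₀ (by norm_num) (he j)
    _ ≤ (x:ℝ) ^ (e j) := by
        apply pow_le_pow_left₀ (by norm_num)
        exact_mod_cast hx

private lemma exp_ge {N : ℕ} (hN2 : 2 ≤ N) (m : ℕ) : m ≤ N ^ m :=
  (Nat.lt_pow_self (by omega : 1 < N) : m < N ^ m).le

noncomputable def SS (q N : ℕ) (p : Fin q → ℕ) (a b : Fin q → ℤ) (m : ℕ) : ℝ :=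
  ∑ i, ((a i : ℝ) * ((p i : ℝ) ^ (N ^ (2 * m)))⁻¹
    + (b i : ℝ) * ((p i : ℝ) ^ (N ^ (2 * m + 1)))⁻¹)

noncomputable def TT (q N : ℕ) (p : Fin q → ℕ) (a b : Fin q → ℤ) (k : ℕ) : ℝ :=
  ∑' j : ℕ, SS q N p a b (k + j)

private lemma summable_SS (q N : ℕ) (p : Fin q → ℕ) (a b : Fin q → ℤ)
    (hp2 : ∀ i, 2 ≤ p i) (hN2 : 2 ≤ N) (k : ℕ) :
    Summable (fun j : ℕ => SS q N p a b (k + j)) := by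
  unfold SS
  apply summable_sum
  intro i _
  apply Summable.add
  · exact (aux_summable (p i) (hp2 i) (fun j => N ^ (2 * (k + j)))
      (fun j => le_trans (by omega) (exp_ge hN2 (2 * (k + j))))).mul_left _
  · exact (aux_summable (p i) (hp2 i) (fun j => N ^ (2 * (k + j) + 1))
      (fun j => le_trans (by omega) (exp_ge hN2 (2 * (k + j) + 1)))).mul_left _

private lemma TT_step (q N : ℕ) (p : Fin q → ℕ) (a b : Fin q → ℤ)
    (hp2 : ∀ i, 2 ≤ p i) (hN2 : 2 ≤ N) (k : ℕ) :
    TT q N p a b k = SS q N p a b k + TT q N p a b (k + 1) := by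
  unfold TT
  rw [Summable.tsum_eq_zero_add (summable_SS q N p a b hp2 hN2 k)]
  have h2 : ∑' (j : ℕ), SS q N p a b (k + (j + 1)) = ∑' (j : ℕ), SS q N p a b ((k + 1) + j) :=
    tsum_congr fun j => congrArg _ (by omega)
  rw [h2]
  norm_num

private lemma abs_SS_le (q N : ℕ) (p : Fin q → ℕ) (a b : Fin q → ℤ)
    (P0 : ℕ) (hP0 : 2 ≤ P0) (hP0le : ∀ i, P0 ≤ p i) (hN2 : 2 ≤ N) (m : ℕ) :
    |SS q N p a b m| ≤
      (∑ i, (|(a i : ℝ)| + |(b i : ℝ)|)) * ((P0 : ℝ) ^ (N ^ (2 * m)))⁻¹ := by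
  unfold SS
  rw [Finset.sum_mul]
  refine (Finset.abs_sum_le_sum_abs _ _).trans (Finset.sum_le_sum fun i _ => ?_)
  have hpi : (P0:ℝ) ≤ (p i : ℝ) := by exact_mod_cast hP0le i
  have hP0R : (2:ℝ) ≤ (P0:ℝ) := by exact_mod_cast hP0
  have h1 : ((p i:ℝ) ^ (N^(2*m)))⁻¹ ≤ ((P0:ℝ) ^ (N^(2*m)))⁻¹ := by
    apply inv_anti₀ (by positivity)
    exact pow_le_pow_left₀ (by positivity) hpi _
  have h2 : ((p i:ℝ) ^ (N^(2*m+1)))⁻¹ ≤ ((P0:ℝ) ^ (N^(2*m)))⁻¹ := by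
    apply inv_anti₀ (by positivity)
    calc (P0:ℝ)^(N^(2*m)) ≤ (p i:ℝ)^(N^(2*m)) := pow_le_pow_left₀ (by positivity) hpi _
      _ ≤ (p i:ℝ)^(N^(2*m+1)) :=
          pow_le_pow_right₀ (by linarith) (Nat.pow_le_pow_right (by omega) (by omega))
  refine (abs_add_le _ _).trans ?_
  rw [abs_mul, abs_mul,
    abs_of_nonneg (by positivity : (0:ℝ) ≤ ((p i:ℝ)^(N^(2*m)))⁻¹),
    abs_of_nonneg (by positivity : (0:ℝ) ≤ ((p i:ℝ)^(N^(2*m+1)))⁻¹), add_mul]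
  have ha := abs_nonneg ((a i : ℝ))
  have hb := abs_nonneg ((b i : ℝ))
  nlinarith [mul_le_mul_of_nonneg_left h1 ha, mul_le_mul_of_nonneg_left h2 hb]

private lemma abs_TT_le (q N : ℕ) (p : Fin q → ℕ) (a b : Fin q → ℤ)
    (P0 : ℕ) (hP0 : 2 ≤ P0) (hP0le : ∀ i, P0 ≤ p i)
    (hp2 : ∀ i, 2 ≤ p i) (hN2 : 2 ≤ N) (k : ℕ) :
    |TT q N p a b k| ≤
      2 * (∑ i, (|(a i : ℝ)| + |(b i : ℝ)|)) * ((P0 : ℝ) ^ (N ^ (2 * k)))⁻¹ := by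
  set M : ℝ := ∑ i, (|(a i : ℝ)| + |(b i : ℝ)|) with hM
  have hM0 : 0 ≤ M := Finset.sum_nonneg fun i _ => by positivity
  have hP0R : (2:ℝ) ≤ (P0:ℝ) := by exact_mod_cast hP0
  have key : ∀ j : ℕ, |SS q N p a b (k + j)| ≤
      M * ((P0 : ℝ) ^ (N ^ (2 * k)))⁻¹ * (1/2 : ℝ) ^ j := by
    intro j
    refine (abs_SS_le q N p a b P0 hP0 hP0le hN2 (k + j)).trans ?_
    rw [mul_assoc]
    apply mul_le_mul_of_nonneg_left ?_ hM0
    have hle : (P0:ℝ) ^ (N ^ (2*k)) * 2 ^ j ≤ (P0:ℝ) ^ (N ^ (2*(k+j))) := by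
      have hexp : N ^ (2*k) + j ≤ N ^ (2*(k+j)) := by
        have h1 : N ^ (2*(k+j)) = N ^ (2*k) * N ^ (2*j) := by rw [← pow_add]; ring_nf
        have h2 : 2*j < N ^ (2*j) := Nat.lt_pow_self (by omega : 1 < N)
        have h3 : 1 ≤ N ^ (2*k) := Nat.one_le_pow _ _ (by omega)
        calc N ^ (2*k) + j ≤ N ^ (2*k) * (j + 1) := by nlinarith
          _ ≤ N ^ (2*k) * N ^ (2*j) := Nat.mul_le_mul_left _ (by omega)
          _ = N ^ (2*(k+j)) := h1.symm
      calc (P0:ℝ) ^ (N ^ (2*k)) * 2 ^ j ≤ (P0:ℝ) ^ (N ^ (2*k)) * (P0:ℝ) ^ j := by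
            apply mul_le_mul_of_nonneg_left (pow_le_pow_left₀ (by norm_num) hP0R _) (by positivity)
        _ = (P0:ℝ) ^ (N ^ (2*k) + j) := by rw [pow_add]
        _ ≤ (P0:ℝ) ^ (N ^ (2*(k+j))) := pow_le_pow_right₀ (by linarith) hexp
    have h2j : ((P0:ℝ) ^ (N ^ (2*k)))⁻¹ * (1/2:ℝ)^j
        = ((P0:ℝ) ^ (N ^ (2*k)) * 2 ^ j)⁻¹ := by
      rw [mul_inv, one_div, inv_pow]
    rw [h2j]
    exact inv_anti₀ (by positivity) hle
  have hsum2 : Summable (fun j : ℕ => M * ((P0 : ℝ) ^ (N ^ (2 * k)))⁻¹ * (1/2:ℝ) ^ j) :=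
    summable_geometric_two.mul_left _
  have hsum1 : Summable (fun j : ℕ => |SS q N p a b (k + j)|) :=
    Summable.of_nonneg_of_le (fun j => abs_nonneg _) key hsum2
  calc |TT q N p a b k| ≤ ∑' j : ℕ, |SS q N p a b (k + j)| := by
        simpa [Real.norm_eq_abs, TT] using
          norm_tsum_le_tsum_norm (f := fun j : ℕ => SS q N p a b (k + j))
            (by simpa [Real.norm_eq_abs] using hsum1)
    _ ≤ ∑' j : ℕ, M * ((P0 : ℝ) ^ (N ^ (2 * k)))⁻¹ * (1/2:ℝ) ^ j :=
        Summable.tsum_le_tsum key hsum1 hsum2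
    _ = M * ((P0 : ℝ) ^ (N ^ (2 * k)))⁻¹ * 2 := by
        rw [tsum_mul_left, tsum_geometric_two]
    _ = 2 * M * ((P0 : ℝ) ^ (N ^ (2 * k)))⁻¹ := by ring

/-- If integers `a, b, c` satisfy `∑ i (a i * z i + b i * z_{i+q}) = c`,
then for all large enough `k`, `∑ i (a i * p_i^{-N^{2k}} + b i * p_i^{-N^{2k+1}}) = 0`. -/
theorem stmt4 (q : ℕ) (hq : 2 ≤ q) (p : Fin q → ℕ) (hp1 : ∀ i, 1 < p i)
    (hmono : StrictMono p) (N : ℕ)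
    (hN : (q : ℝ) * Real.log (p ⟨q - 1, by omega⟩) / Real.log (p ⟨0, by omega⟩) < (N : ℝ))
    (zA zB : Fin q → ℝ)
    (hzA : ∀ i, zA i = ∑' k : ℕ, ((p i : ℝ) ^ (N ^ (2 * (k + 1))))⁻¹)
    (hzB : ∀ i, zB i = ∑' k : ℕ, ((p i : ℝ) ^ (N ^ (2 * (k + 1) + 1)))⁻¹)
    (a b : Fin q → ℤ) (c : ℤ)
    (h : ∑ i, ((a i : ℝ) * zA i + (b i : ℝ) * zB i) = (c : ℝ)) :
    ∃ k₀ : ℕ, 1 ≤ k₀ ∧ ∀ k ≥ k₀,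
      ∑ i, ((a i : ℝ) * ((p i : ℝ) ^ (N ^ (2 * k)))⁻¹
        + (b i : ℝ) * ((p i : ℝ) ^ (N ^ (2 * k + 1)))⁻¹) = 0 := by
  have hp2 : ∀ i, 2 ≤ p i := hp1
  set P0 : ℕ := p ⟨0, by omega⟩ with hP0def
  set Pq : ℕ := p ⟨q - 1, by omega⟩ with hPqdef
  have hP0 : 2 ≤ P0 := hp2 _
  have hPq2 : 2 ≤ Pq := hp2 _
  have hP0le : ∀ i, P0 ≤ p i := fun i =>
    hmono.monotone (show (⟨0, by omega⟩ : Fin q) ≤ i by simp [Fin.le_def])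
  have hPqge : ∀ i, p i ≤ Pq := fun i =>
    hmono.monotone (show i ≤ (⟨q - 1, by omega⟩ : Fin q) by
      simp [Fin.le_def]; omega)
  have hlog0 : 0 < Real.log P0 := Real.log_pos (by exact_mod_cast hP0.trans_lt' one_lt_two)
  have hlogle : Real.log (P0 : ℝ) ≤ Real.log (Pq : ℝ) := by
    apply Real.log_le_log (by positivity)
    exact_mod_cast hP0le _
  -- q < N
  have hNq : q < N := by
    have h1 : (q:ℝ) ≤ (q:ℝ) * Real.log Pq / Real.log P0 := by
      rw [le_div_iff₀ hlog0]
      have : (0:ℝ) ≤ (q:ℝ) := by positivity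
      nlinarith
    have : (q:ℝ) < (N:ℝ) := lt_of_le_of_lt h1 hN
    exact_mod_cast this
  have hN2 : 2 ≤ N := by omega
  -- Pq ^ q < P0 ^ N
  have hkey : Pq ^ q < P0 ^ N := by
    have h1 : (q:ℝ) * Real.log Pq < (N:ℝ) * Real.log P0 := by
      rw [div_lt_iff₀ hlog0] at hN; linarith
    have h2 : Real.log ((Pq:ℝ) ^ q) < Real.log ((P0:ℝ) ^ N) := by
      rw [Real.log_pow, Real.log_pow]; exact h1
    have h3 : ((Pq:ℝ)) ^ q < ((P0:ℝ)) ^ N :=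
      (Real.log_lt_log_iff (by positivity) (by positivity)).mp h2
    exact_mod_cast h3
  -- D
  set D : ℕ := ∏ i, p i with hDdef
  have hD1 : 1 ≤ D := Finset.one_le_prod' fun i _ => by have := hp2 i; omega
  have hDle : D ≤ Pq ^ q := by
    calc D ≤ ∏ _i : Fin q, Pq := Finset.prod_le_prod' fun i _ => hPqge i
      _ = Pq ^ q := by simp [Finset.prod_const]
  have hDlt : D < P0 ^ N := lt_of_le_of_lt hDle hkey
  have hpdvdD : ∀ i, p i ∣ D := fun i => Finset.dvd_prod_of_mem p (Finset.mem_univ i)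
  -- the subring of integers
  set R : Subring ℝ := (Int.castRingHom ℝ).range with hRdef
  have hmemD : ∀ (E e : ℕ) (i : Fin q), e ≤ E → ((D:ℝ) ^ E) * ((p i : ℝ) ^ e)⁻¹ ∈ R := by
    intro E e i he
    obtain ⟨t, ht⟩ : p i ^ e ∣ D ^ E := (pow_dvd_pow_of_dvd (hpdvdD i) e).trans (pow_dvd_pow D he)
    refine ⟨(t : ℤ), ?_⟩
    have hne : ((p i : ℝ) ^ e) ≠ 0 := by
      have := hp2 i; positivity
    have hcast : ((D:ℝ)) ^ E = ((p i : ℝ)) ^ e * (t : ℝ) := by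
      have : ((D ^ E : ℕ) : ℝ) = ((p i ^ e * t : ℕ) : ℝ) := by rw [ht]
      push_cast at this; linarith
    simp only [Int.coe_castRingHom]
    push_cast
    rw [hcast]
    field_simp
  have hSmem : ∀ (m E : ℕ), N ^ (2 * m + 1) ≤ E → ((D:ℝ) ^ E) * SS q N p a b m ∈ R := by
    intro m E hE
    unfold SS
    rw [Finset.mul_sum]
    apply Subring.sum_mem
    intro i _
    rw [mul_add]
    apply add_mem
    · rw [show (D:ℝ)^E * ((a i : ℝ) * ((p i : ℝ) ^ (N ^ (2*m)))⁻¹)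
          = (a i : ℝ) * ((D:ℝ)^E * ((p i : ℝ) ^ (N ^ (2*m)))⁻¹) by ring]
      exact mul_mem (intCast_mem R (a i))
        (hmemD E _ i (le_trans (Nat.pow_le_pow_right (by omega) (by omega)) hE))
    · rw [show (D:ℝ)^E * ((b i : ℝ) * ((p i : ℝ) ^ (N ^ (2*m+1)))⁻¹)
          = (b i : ℝ) * ((D:ℝ)^E * ((p i : ℝ) ^ (N ^ (2*m+1)))⁻¹) by ring]
      exact mul_mem (intCast_mem R (b i)) (hmemD E _ i hE)
  -- TT 1 = c
  have hsummA : ∀ i : Fin q, Summable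
      (fun j : ℕ => (a i : ℝ) * ((p i : ℝ) ^ (N ^ (2 * (j + 1))))⁻¹) := fun i =>
    (aux_summable (p i) (hp2 i) (fun j => N ^ (2 * (j + 1)))
      (fun j => le_trans (by omega) (exp_ge hN2 _))).mul_left _
  have hsummB : ∀ i : Fin q, Summable
      (fun j : ℕ => (b i : ℝ) * ((p i : ℝ) ^ (N ^ (2 * (j + 1) + 1)))⁻¹) := fun i =>
    (aux_summable (p i) (hp2 i) (fun j => N ^ (2 * (j + 1) + 1))
      (fun j => le_trans (by omega) (exp_ge hN2 _))).mul_left _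
  have hT1 : TT q N p a b 1 = (c : ℝ) := by
    rw [← h]
    unfold TT
    calc ∑' j : ℕ, SS q N p a b (1 + j)
        = ∑' j : ℕ, ∑ i, ((a i : ℝ) * ((p i : ℝ) ^ (N ^ (2 * (j + 1))))⁻¹
            + (b i : ℝ) * ((p i : ℝ) ^ (N ^ (2 * (j + 1) + 1)))⁻¹) := by
          refine tsum_congr fun j => ?_
          rw [show 1 + j = j + 1 by omega]
          rfl
      _ = ∑ i, ∑' j : ℕ, ((a i : ℝ) * ((p i : ℝ) ^ (N ^ (2 * (j + 1))))⁻¹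
            + (b i : ℝ) * ((p i : ℝ) ^ (N ^ (2 * (j + 1) + 1)))⁻¹) :=
          Summable.tsum_finsetSum fun i _ => (hsummA i).add (hsummB i)
      _ = ∑ i, ((a i : ℝ) * zA i + (b i : ℝ) * zB i) := by
          refine Finset.sum_congr rfl fun i _ => ?_
          rw [Summable.tsum_add (hsummA i) (hsummB i), tsum_mul_left, tsum_mul_left,
            hzA i, hzB i]
  -- integrality of TT
  have hTmem : ∀ k : ℕ, ((D:ℝ) ^ (N ^ (2 * k + 1))) * TT q N p a b (k + 1) ∈ R := by
    intro k
    induction k with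
    | zero =>
      rw [hT1]
      exact mul_mem (pow_mem (natCast_mem R D) _) (intCast_mem R c)
    | succ k ih =>
      have hstep := TT_step q N p a b hp2 hN2 (k + 1)
      have hTT : TT q N p a b (k + 2) = TT q N p a b (k + 1) - SS q N p a b (k + 1) := by
        rw [hstep]; ring_nf
      have hEle : N ^ (2 * k + 1) ≤ N ^ (2 * (k + 1) + 1) :=
        Nat.pow_le_pow_right (by omega) (by omega)
      have hsplit : (D:ℝ) ^ (N ^ (2 * (k + 1) + 1))
          = (D:ℝ) ^ (N ^ (2 * (k + 1) + 1) - N ^ (2 * k + 1)) * (D:ℝ) ^ (N ^ (2 * k + 1)) := by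
        rw [← pow_add]
        congr 1
        omega
      rw [show k + 1 + 1 = k + 2 by omega, hTT, mul_sub]
      apply sub_mem
      · rw [hsplit, mul_assoc]
        exact mul_mem (pow_mem (natCast_mem R D) _) ih
      · exact hSmem (k + 1) _ le_rfl
  -- choose k₀
  set M : ℝ := ∑ i, (|(a i : ℝ)| + |(b i : ℝ)|) with hMdef
  have hM0 : 0 ≤ M := Finset.sum_nonneg fun i _ => by positivity
  set r : ℝ := (D : ℝ) / (P0 : ℝ) ^ N with hrdef
  have hP0posR : (0:ℝ) < (P0:ℝ) ^ N := by
    have : (0:ℝ) < (P0:ℝ) := by exact_mod_cast (by omega : 0 < P0)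
    positivity
  have hr0 : 0 ≤ r := by
    apply div_nonneg _ hP0posR.le
    positivity
  have hr1 : r < 1 := by
    rw [hrdef, div_lt_one hP0posR]
    exact_mod_cast hDlt
  obtain ⟨n, hn⟩ := exists_pow_lt_of_lt_one
    (show (0:ℝ) < 1 / (2 * M + 1) by positivity) hr1
  refine ⟨n + 1, by omega, ?_⟩
  have hT0 : ∀ k, n + 1 ≤ k → TT q N p a b k = 0 := by
    intro k hk
    obtain ⟨m, rfl⟩ : ∃ m, k = m + 1 := ⟨k - 1, by omega⟩
    obtain ⟨t, ht⟩ := hTmem m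
    simp only [Int.coe_castRingHom] at ht
    have hDposR : (0:ℝ) < (D:ℝ) ^ (N ^ (2 * m + 1)) := by
      have : (0:ℝ) < (D:ℝ) := by exact_mod_cast hD1
      positivity
    have hbound : |(D:ℝ) ^ (N ^ (2 * m + 1)) * TT q N p a b (m + 1)|
        ≤ 2 * M * r ^ (N ^ (2 * m + 1)) := by
      rw [abs_mul, abs_of_nonneg hDposR.le]
      calc (D:ℝ) ^ (N ^ (2 * m + 1)) * |TT q N p a b (m + 1)|
          ≤ (D:ℝ) ^ (N ^ (2 * m + 1)) * (2 * M * ((P0 : ℝ) ^ (N ^ (2 * (m+1))))⁻¹) :=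
            mul_le_mul_of_nonneg_left
              (abs_TT_le q N p a b P0 hP0 hP0le hp2 hN2 (m+1)) hDposR.le
        _ = 2 * M * r ^ (N ^ (2 * m + 1)) := by
            rw [hrdef, div_pow, div_eq_mul_inv, ← pow_mul,
              show N * N ^ (2 * m + 1) = N ^ (2 * (m + 1)) by rw [← pow_succ']; ring_nf]
            ring
    have hsmall : 2 * M * r ^ (N ^ (2 * m + 1)) < 1 := by
      have hne : n ≤ N ^ (2 * m + 1) := by
        have := exp_ge hN2 (2 * m + 1)
        omega
      have h1 : r ^ (N ^ (2 * m + 1)) ≤ r ^ n := pow_le_pow_of_le_one hr0 hr1.le hne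
      have h2 : (0:ℝ) ≤ r ^ n := by positivity
      have h3 : (2 * M + 1) * r ^ n < (2 * M + 1) * (1 / (2 * M + 1)) :=
        mul_lt_mul_of_pos_left hn (by positivity)
      have h4 : (2 * M + 1) * (1 / (2 * M + 1)) = 1 := by field_simp
      nlinarith
    rw [← ht] at hbound
    have htz : t = 0 := by
      have : |(t:ℝ)| < 1 := lt_of_le_of_lt hbound hsmall
      have : |t| < 1 := by exact_mod_cast this
      rw [abs_lt] at this
      omega
    rw [htz] at ht
    simp only [Int.cast_zero] at ht
    have := ht.symm
    rcases mul_eq_zero.mp this with h' | h'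
    · exact absurd h' hDposR.ne'
    · exact h'
  intro k hk
  have h1 : TT q N p a b k = 0 := hT0 k hk
  have h2 : TT q N p a b (k + 1) = 0 := hT0 (k + 1) (by omega)
  have h3 := TT_step q N p a b hp2 hN2 k
  rw [h1, h2] at h3
  have : SS q N p a b k = 0 := by linarith
  simpa [SS] using this
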